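/- Let G be a finite simple bipartite graph that is determined by its Laplacian spectrum, meaning that every finite simple graph whose Laplacian matrix L = D − A has the same characteristic polynomial as L(G) is isomorphic to G. Then G is determined by its A_α-spectrum: every finite simple graph H such that, for every real α ∈ [0,1], the characteristic polynomials of A_α(H) and A_α(G) coincide, is isomorphic to G. -/

import Mathlib

open Matrix Polynomial BigOperators


lemma eval_charpoly {n : Type} [Fintype n] [DecidableEq n] (M : Matrix n n ℝ) (x : ℝ) :
    M.charpoly.eval x = (x • (1 : Matrix n n ℝ) - M).det := by
  rw [Matrix.charpoly, ← coe_evalRingHom, RingHom.map_det]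
  congr 1
  ext i j
  by_cases h : i = j <;>
    simp [h, charmatrix_apply, Matrix.map_apply, Matrix.diagonal_apply, Matrix.one_apply,
      Matrix.smul_apply, Matrix.sub_apply]

lemma charpoly_smul_eq {n m : Type} [Fintype n] [DecidableEq n] [Fintype m] [DecidableEq m]
    (M : Matrix n n ℝ) (N : Matrix m m ℝ) (c : ℝ) (hc : c ≠ 0)
    (h : M.charpoly = N.charpoly) : (c • M).charpoly = (c • N).charpoly := by
  have hcard : Fintype.card n = Fintype.card m := by
    rw [← Matrix.charpoly_natDegree_eq_dim M, ← Matrix.charpoly_natDegree_eq_dim N, h]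
  apply Polynomial.funext
  intro x
  have key : ∀ {k : Type} [Fintype k] [DecidableEq k] (P : Matrix k k ℝ),
      (c • P).charpoly.eval x = c ^ (Fintype.card k) * P.charpoly.eval (c⁻¹ * x) := by
    intro k _ _ P
    rw [_root_.eval_charpoly, _root_.eval_charpoly, ← Matrix.det_smul _ c]
    congr 1
    rw [smul_sub, smul_smul, mul_inv_cancel_left₀ hc]
  rw [key M, key N, h, hcard]


/-- Let `G` be a finite simple bipartite graph that is determined by its
Laplacian spectrum (every finite simple graph whose Laplacian `L = D − A` has the same
characteristic polynomial as `L(G)` is isomorphic to `G`). Then `G` is determined by its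
`A_α`-spectrum: every finite simple graph `H` such that for all `α ∈ [0,1]` the
characteristic polynomials of `A_α(H)` and `A_α(G)` coincide is isomorphic to `G`. -/
theorem bipartite_L_DS_implies_Aalpha_DS {V : Type} [Fintype V] [DecidableEq V]
    (G : SimpleGraph V) [DecidableRel G.Adj]
    (hbip : G.Colorable 2)
    (hLDS : ∀ (W : Type) [Fintype W] [DecidableEq W] (H : SimpleGraph W),
      ∀ [DecidableRel H.Adj],
      Matrix.charpoly (Matrix.diagonal (fun w => (H.degree w : ℝ)) - H.adjMatrix ℝ)
        = Matrix.charpoly (Matrix.diagonal (fun v => (G.degree v : ℝ)) - G.adjMatrix ℝ)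
        → Nonempty (G ≃g H)) :
    ∀ (W : Type) [Fintype W] [DecidableEq W] (H : SimpleGraph W),
      ∀ [DecidableRel H.Adj],
      (∀ α : ℝ, α ∈ Set.Icc (0 : ℝ) 1 →
        Matrix.charpoly
            (α • Matrix.diagonal (fun w => (H.degree w : ℝ)) + (1 - α) • H.adjMatrix ℝ)
          = Matrix.charpoly
            (α • Matrix.diagonal (fun v => (G.degree v : ℝ)) + (1 - α) • G.adjMatrix ℝ))
      → Nonempty (G ≃g H) := by
  intro W _ _ H _ hspec
  set DH : Matrix W W ℝ := Matrix.diagonal (fun w => (H.degree w : ℝ)) with hDH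
  set AH : Matrix W W ℝ := H.adjMatrix ℝ with hAH
  set DG : Matrix V V ℝ := Matrix.diagonal (fun v => (G.degree v : ℝ)) with hDG
  set AG : Matrix V V ℝ := G.adjMatrix ℝ with hAG
  -- Step 1: for s < 0, charpolys of s•D + (s-2)•A agree
  have step1 : ∀ s : ℝ, s < 0 →
      (s • DH + (s - 2) • AH).charpoly = (s • DG + (s - 2) • AG).charpoly := by
    intro s hs
    have hcneg : (2 * s - 2 : ℝ) < 0 := by linarith
    have hc : (2 * s - 2 : ℝ) ≠ 0 := ne_of_lt hcneg
    have hα : (s / (2 * s - 2)) ∈ Set.Icc (0 : ℝ) 1 := by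
      constructor
      · rw [div_nonneg_iff]
        right
        exact ⟨le_of_lt hs, le_of_lt hcneg⟩
      · rw [div_le_one_iff]
        right; right
        exact ⟨hcneg, by linarith⟩
    have h1 := hspec _ hα
    have h2 := charpoly_smul_eq _ _ (2 * s - 2) hc h1
    have hcα : (2 * s - 2) * (s / (2 * s - 2)) = s := by rw [mul_comm]; exact div_mul_cancel₀ s hc
    have hc1α : (2 * s - 2) * (1 - s / (2 * s - 2)) = s - 2 := by
      rw [mul_sub, mul_one, hcα]
      ring
    have eH : (2 * s - 2) • ((s / (2 * s - 2)) • DH + (1 - s / (2 * s - 2)) • AH)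
        = s • DH + (s - 2) • AH := by
      rw [smul_add, smul_smul, smul_smul, hcα, hc1α]
    have eG : (2 * s - 2) • ((s / (2 * s - 2)) • DG + (1 - s / (2 * s - 2)) • AG)
        = s • DG + (s - 2) • AG := by
      rw [smul_add, smul_smul, smul_smul, hcα, hc1α]
    rwa [eH, eG] at h2
  -- Step 2: polynomial matrices
  set NH : Matrix W W ℝ[X] := (X : ℝ[X]) • DH.map C + ((X : ℝ[X]) - 2) • AH.map C with hNH
  set NG : Matrix V V ℝ[X] := (X : ℝ[X]) • DG.map C + ((X : ℝ[X]) - 2) • AG.map C with hNG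
  have hmapH : ∀ s : ℝ, NH.map (evalRingHom s) = s • DH + (s - 2) • AH := by
    intro s; ext i j
    simp [hNH, Matrix.map_apply, Matrix.add_apply, Matrix.smul_apply]
    ring
  have hmapG : ∀ s : ℝ, NG.map (evalRingHom s) = s • DG + (s - 2) • AG := by
    intro s; ext i j
    simp [hNG, Matrix.map_apply, Matrix.add_apply, Matrix.smul_apply]
    ring
  have hNeq : NH.charpoly = NG.charpoly := by
    apply Polynomial.ext
    intro k
    have hroot : ∀ s : ℝ, s < 0 →
        (NH.charpoly.coeff k - NG.charpoly.coeff k).IsRoot s := by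
      intro s hs
      have hH : (NH.charpoly.coeff k).eval s
          = ((s • DH + (s - 2) • AH).charpoly).coeff k := by
        rw [← hmapH s, Matrix.charpoly_map, Polynomial.coeff_map, coe_evalRingHom]
      have hG : (NG.charpoly.coeff k).eval s
          = ((s • DG + (s - 2) • AG).charpoly).coeff k := by
        rw [← hmapG s, Matrix.charpoly_map, Polynomial.coeff_map, coe_evalRingHom]
      simp only [Polynomial.IsRoot, Polynomial.eval_sub, hH, hG, step1 s hs, sub_self]
    have : NH.charpoly.coeff k - NG.charpoly.coeff k = 0 := by
      apply Polynomial.eq_zero_of_infinite_isRoot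
      exact Set.Infinite.mono (fun s hs => hroot s hs) (Set.Iio_infinite 0)
    exact sub_eq_zero.mp this
  -- Step 3: evaluate at 1
  have hfin : (DH - AH).charpoly = (DG - AG).charpoly := by
    have h1 : (NH.map (evalRingHom 1)).charpoly = (NG.map (evalRingHom 1)).charpoly := by
      rw [Matrix.charpoly_map, Matrix.charpoly_map, hNeq]
    rw [hmapH, hmapG] at h1
    have e1 : (1 : ℝ) • DH + ((1 : ℝ) - 2) • AH = DH - AH := by
      norm_num [sub_eq_add_neg]
    have e2 : (1 : ℝ) • DG + ((1 : ℝ) - 2) • AG = DG - AG := by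
      norm_num [sub_eq_add_neg]
    rwa [e1, e2] at h1
  exact hLDS W H hfin
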